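/- Let Z ∈ {0,1}^{n×k} be the assignment matrix of a partition ψ of {1,…,n} into k nonempty classes, let Q ∈ ℝ^{k×k} be orthonormal, and let X ∈ ℝ^{n×k} be any matrix all of whose rows are nonzero, with X̄ its row-normalized version (each row divided by its Euclidean norm). Then ‖X̄ − Z Q‖_F² ≤ 4 n₁ ‖X − Z (ZᵀZ)^{-1/2} Q‖_F², where n₁ = max_j (ZᵀZ)_{jj} is the size of the largest class. -/

import Mathlib

open MeasureTheory ProbabilityTheory Matrix Finset

noncomputable section

/-- The set of all possible edges: subsets of `Fin n` of cardinality between `2` and `M`. -/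
def edgeSet (n M : ℕ) : Finset (Finset (Fin n)) :=
  Finset.univ.filter fun ξ => 2 ≤ ξ.card ∧ ξ.card ≤ M

/-- Indicator vector of a possible edge. -/
def aVec {n : ℕ} (ξ : Finset (Fin n)) : Fin n → ℝ := fun i => if i ∈ ξ then 1 else 0

/-- Degree vector associated with edge weights `w`. -/
def degOf (n M : ℕ) (w : Finset (Fin n) → ℝ) (i : Fin n) : ℝ :=
  ∑ ξ ∈ edgeSet n M, w ξ * aVec ξ i

/-- Weighted adjacency matrix `∑_ξ (w ξ/|ξ|) a_ξ a_ξᵀ`. -/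
def adjOf (n M : ℕ) (w : Finset (Fin n) → ℝ) : Matrix (Fin n) (Fin n) ℝ :=
  Matrix.of fun i j => ∑ ξ ∈ edgeSet n M, (w ξ / (ξ.card : ℝ)) * (aVec ξ i * aVec ξ j)

/-- Diagonal matrix with entries `(√ d_i)⁻¹`. -/
def invSqrtDiag {n : ℕ} (dv : Fin n → ℝ) : Matrix (Fin n) (Fin n) ℝ :=
  Matrix.diagonal fun i => (Real.sqrt (dv i))⁻¹

/-- Normalized hypergraph Laplacian associated with edge weights `w`. -/
def lapOf (n M : ℕ) (w : Finset (Fin n) → ℝ) : Matrix (Fin n) (Fin n) ℝ :=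
  1 - invSqrtDiag (degOf n M w) * adjOf n M w * invSqrtDiag (degOf n M w)

/-- Minimum expected degree. -/
def dminOf (n M : ℕ) (p : Finset (Fin n) → ℝ) : ℝ := ⨅ i, degOf n M p i

/-- Assignment matrix of a partition. -/
def assign {n k : ℕ} (ψ : Fin n → Fin k) : Matrix (Fin n) (Fin k) ℝ :=
  Matrix.of fun i c => if ψ i = c then 1 else 0

/-- Size of a class. -/
def clsSize {n k : ℕ} (ψ : Fin n → Fin k) (c : Fin k) : ℕ :=
  (Finset.univ.filter fun i => ψ i = c).card

/-- Largest class size `n₁`. -/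
def maxClsSize {n k : ℕ} (ψ : Fin n → Fin k) : ℕ := Finset.univ.sup (clsSize ψ)

/-- Smallest class size `n_k`. -/
def minClsSize {n k : ℕ} (ψ : Fin n → Fin k) : ℕ := sInf (Set.range (clsSize ψ))

/-- `(ZᵀZ)^{-1/2}` for the assignment matrix `Z`. -/
def invSqrtClsDiag {n k : ℕ} (ψ : Fin n → Fin k) : Matrix (Fin k) (Fin k) ℝ :=
  Matrix.diagonal fun c => (Real.sqrt (clsSize ψ c))⁻¹

/-- Smallest (real) eigenvalue of a matrix. -/
def lambdaMin {k : ℕ} (G : Matrix (Fin k) (Fin k) ℝ) : ℝ :=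
  sInf {μ : ℝ | ∃ v : Fin k → ℝ, v ≠ 0 ∧ G.mulVec v = μ • v}

/-- The identifiability parameter `δ`. -/
def deltaParam {n k : ℕ} (M : ℕ) (ψ : Fin n → Fin k) (p : Finset (Fin n) → ℝ)
    (G : Matrix (Fin k) (Fin k) ℝ) (J : Fin n → ℝ) : ℝ :=
  lambdaMin G * (⨅ i : Fin n, (clsSize ψ (ψ i) : ℝ) / degOf n M p i)
    - ⨆ i : Fin n, ⨆ j : Fin n, |J i / degOf n M p i - J j / degOf n M p j|

/-- Euclidean norm of a vector. -/
def vecNorm {m : Type*} [Fintype m] (v : m → ℝ) : ℝ := Real.sqrt (∑ i, v i ^ 2)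

/-- Frobenius norm of a matrix. -/
def frobNorm {m l : Type*} [Fintype m] [Fintype l] (A : Matrix m l ℝ) : ℝ :=
  Real.sqrt (∑ i, ∑ j, A i j ^ 2)

/-- Spectral norm of a square matrix. -/
def specNorm {n : ℕ} (A : Matrix (Fin n) (Fin n) ℝ) : ℝ :=
  sSup {c : ℝ | ∃ v : Fin n → ℝ, vecNorm v ≤ 1 ∧ c = vecNorm (A.mulVec v)}

/-- Row-normalized version of a matrix. -/
def rowNormalize {n k : ℕ} (X : Matrix (Fin n) (Fin k) ℝ) : Matrix (Fin n) (Fin k) ℝ :=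
  Matrix.of fun i j => X i j / vecNorm (X i)

/-- `X` is a matrix of `k` leading orthonormal eigenvectors of `L`: its columns are
orthonormal eigenvectors, and every eigenvector orthogonal to them has a larger eigenvalue. -/
def LeadingEigvecs {n k : ℕ} (L : Matrix (Fin n) (Fin n) ℝ)
    (X : Matrix (Fin n) (Fin k) ℝ) : Prop :=
  Xᵀ * X = 1 ∧ ∃ Λ : Fin k → ℝ, L * X = X * Matrix.diagonal Λ ∧
    ∀ (μ : ℝ) (v : Fin n → ℝ), v ≠ 0 → L.mulVec v = μ • v → Xᵀ.mulVec v = 0 → ∀ a, Λ a ≤ μ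

/-- Membership in `𝓜_{n×k}(r)`: at most `r` distinct rows. -/
def hasAtMostRows {n k : ℕ} (r : ℕ) (S : Matrix (Fin n) (Fin k) ℝ) : Prop :=
  (Set.range fun i : Fin n => S i).ncard ≤ r

/-- The `k`-means objective `η_r(X) = min_{S ∈ 𝓜(r)} ‖X - S‖_F`. -/
def kmeansObj {n k : ℕ} (r : ℕ) (X : Matrix (Fin n) (Fin k) ℝ) : ℝ :=
  sInf {c : ℝ | ∃ S : Matrix (Fin n) (Fin k) ℝ, hasAtMostRows r S ∧ c = frobNorm (X - S)}

/-- Number of misclassified nodes, minimized over label permutations. -/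
def errCount {n k : ℕ} (ψ ψ' : Fin n → Fin k) : ℕ :=
  sInf {m : ℕ | ∃ σ : Equiv.Perm (Fin k),
    m = (Finset.univ.filter fun i => ψ i ≠ σ (ψ' i)).card}



/-- Auxiliary: perturbation bound for normalizing a vector toward a unit direction. -/
lemma aux_normalize_key {E : Type*} [NormedAddCommGroup E] [NormedSpace ℝ E] (x y : E)
    (hx : x ≠ 0) (hy : y ≠ 0) :
    ‖‖x‖⁻¹ • x - ‖y‖⁻¹ • y‖ ≤ 2 / ‖y‖ * ‖x - y‖ := by
  have ha : (0:ℝ) < ‖x‖ := norm_pos_iff.mpr hx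
  have hb : (0:ℝ) < ‖y‖ := norm_pos_iff.mpr hy
  have hdecomp : ‖x‖⁻¹ • x - ‖y‖⁻¹ • y = ‖y‖⁻¹ • (x - y) + (‖x‖⁻¹ - ‖y‖⁻¹) • x := by
    rw [smul_sub, sub_smul]; abel
  have hxy : |‖y‖ - ‖x‖| ≤ ‖x - y‖ :=
    (abs_norm_sub_norm_le y x).trans (le_of_eq (norm_sub_rev y x))
  have h2 : |‖x‖⁻¹ - ‖y‖⁻¹| * ‖x‖ ≤ ‖y‖⁻¹ * ‖x - y‖ := by
    have habs : |‖x‖⁻¹ - ‖y‖⁻¹| * ‖x‖ = ‖y‖⁻¹ * |‖y‖ - ‖x‖| := by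
      rw [show ‖x‖⁻¹ - ‖y‖⁻¹ = (‖y‖ - ‖x‖) / (‖x‖ * ‖y‖) by field_simp,
        abs_div, abs_of_pos (mul_pos ha hb)]
      field_simp
    rw [habs]
    exact mul_le_mul_of_nonneg_left hxy (by positivity)
  calc ‖‖x‖⁻¹ • x - ‖y‖⁻¹ • y‖
      ≤ ‖‖y‖⁻¹ • (x - y)‖ + ‖(‖x‖⁻¹ - ‖y‖⁻¹) • x‖ := hdecomp ▸ norm_add_le _ _
    _ = ‖y‖⁻¹ * ‖x - y‖ + |‖x‖⁻¹ - ‖y‖⁻¹| * ‖x‖ := by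
        rw [norm_smul, norm_smul, Real.norm_eq_abs, Real.norm_eq_abs, abs_of_pos (by positivity)]
    _ ≤ ‖y‖⁻¹ * ‖x - y‖ + ‖y‖⁻¹ * ‖x - y‖ := by linarith
    _ = 2 / ‖y‖ * ‖x - y‖ := by ring

lemma aux_vecNorm_eq {m : Type*} [Fintype m] (v : m → ℝ) :
    vecNorm v = ‖(WithLp.equiv 2 (m → ℝ)).symm v‖ := by
  rw [EuclideanSpace.norm_eq, vecNorm]
  congr 1
  refine Finset.sum_congr rfl fun i _ => ?_
  rw [WithLp.equiv_symm_apply, WithLp.ofLp_toLp, Real.norm_eq_abs, sq_abs]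

lemma aux_row_ineq (k : ℕ) (x q : Fin k → ℝ) (hx : x ≠ 0) (hq : ∑ j, q j ^ 2 = 1)
    (s : ℝ) (hs : 0 < s) :
    ∑ j, (x j / vecNorm x - q j) ^ 2 ≤ 4 * s * ∑ j, (x j - (Real.sqrt s)⁻¹ * q j) ^ 2 := by
  set toE := (WithLp.equiv 2 (Fin k → ℝ)).symm with htoE
  have hXne : toE x ≠ 0 := fun h => hx (by simpa [htoE] using congrArg WithLp.ofLp h)
  have hQnorm : ‖toE q‖ = 1 := by
    rw [← aux_vecNorm_eq, vecNorm, hq, Real.sqrt_one]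
  have hQne : toE q ≠ 0 := by
    intro h; rw [h, norm_zero] at hQnorm; exact one_ne_zero hQnorm.symm
  set c : ℝ := (Real.sqrt s)⁻¹ with hc
  have hcpos : 0 < c := by positivity
  set y : EuclideanSpace ℝ (Fin k) := c • toE q with hy
  have hyne : y ≠ 0 := smul_ne_zero (ne_of_gt hcpos) hQne
  have hynorm : ‖y‖ = c := by
    rw [hy, norm_smul, Real.norm_eq_abs, abs_of_pos hcpos, hQnorm, mul_one]
  have hyunit : ‖y‖⁻¹ • y = toE q := by
    rw [hynorm, hy, smul_smul, inv_mul_cancel₀ (ne_of_gt hcpos), one_smul]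
  have hkey : ‖‖toE x‖⁻¹ • toE x - toE q‖ ≤ 2 / c * ‖toE x - y‖ := by
    rw [← hyunit, ← hynorm]; exact aux_normalize_key _ _ hXne hyne
  have hL : ∑ j, (x j / vecNorm x - q j) ^ 2 = ‖‖toE x‖⁻¹ • toE x - toE q‖ ^ 2 := by
    have : ‖toE x‖⁻¹ • toE x - toE q = toE (fun j => x j / vecNorm x - q j) := by
      ext j
      simp [htoE, aux_vecNorm_eq, div_eq_inv_mul]
    rw [this, ← aux_vecNorm_eq]
    exact (Real.sq_sqrt (by positivity)).symm
  have hR : ∑ j, (x j - c * q j) ^ 2 = ‖toE x - y‖ ^ 2 := by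
    have : toE x - y = toE (fun j => x j - c * q j) := by
      ext j; simp [htoE, hy]
    rw [this, ← aux_vecNorm_eq, vecNorm, Real.sq_sqrt (by positivity)]
  rw [hL, hR]
  have hc2 : c ^ 2 = s⁻¹ := by rw [hc, inv_pow, Real.sq_sqrt hs.le]
  have h4 : (2 / c) ^ 2 = 4 * s := by
    rw [div_pow, hc2, div_eq_mul_inv, inv_inv]; norm_num
  calc ‖‖toE x‖⁻¹ • toE x - toE q‖ ^ 2 ≤ (2 / c * ‖toE x - y‖) ^ 2 := by
        apply pow_le_pow_left₀ (norm_nonneg _) hkey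
    _ = 4 * s * ‖toE x - y‖ ^ 2 := by rw [mul_pow, h4]

/-- Row-normalization perturbation: for an assignment matrix `Z` of a partition with nonempty
classes, an orthonormal `Q`, and any `X` with nonzero rows,
`‖X̄ - Z Q‖_F² ≤ 4 n₁ ‖X - Z (ZᵀZ)^{-1/2} Q‖_F²` where `n₁` is the largest class size. -/
theorem rowNormalize_perturbation
    (n k : ℕ) (ψ : Fin n → Fin k) (hsurj : Function.Surjective ψ)
    (Q : Matrix (Fin k) (Fin k) ℝ) (hQ : Qᵀ * Q = 1) (hQ' : Q * Qᵀ = 1)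
    (X : Matrix (Fin n) (Fin k) ℝ) (hX : ∀ i, X i ≠ 0) :
    frobNorm (rowNormalize X - assign ψ * Q) ^ 2 ≤
      4 * (maxClsSize ψ : ℝ) *
        frobNorm (X - assign ψ * invSqrtClsDiag ψ * Q) ^ 2 := by
  classical
  have hZQ : ∀ i j, (assign ψ * Q) i j = Q (ψ i) j := by
    intro i j; simp [Matrix.mul_apply, assign]
  have hZDQ : ∀ i j, (assign ψ * invSqrtClsDiag ψ * Q) i j
      = (Real.sqrt (clsSize ψ (ψ i)))⁻¹ * Q (ψ i) j := by
    intro i j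
    rw [Matrix.mul_assoc, Matrix.mul_apply]
    simp [assign, invSqrtClsDiag, Matrix.diagonal_mul]
  have hqrow : ∀ c, ∑ j, Q c j ^ 2 = 1 := by
    intro c
    have h := congrFun (congrFun hQ' c) c
    simp only [Matrix.mul_apply, Matrix.transpose_apply, Matrix.one_apply_eq] at h
    simpa [sq] using h
  have hcls_pos : ∀ i, 0 < (clsSize ψ (ψ i) : ℝ) := by
    intro i
    have : 0 < clsSize ψ (ψ i) := Finset.card_pos.mpr ⟨i, by simp [clsSize]⟩
    exact_mod_cast this
  have hcls_le : ∀ i, (clsSize ψ (ψ i) : ℝ) ≤ (maxClsSize ψ : ℝ) := by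
    intro i
    exact_mod_cast Finset.le_sup (f := clsSize ψ) (Finset.mem_univ (ψ i))
  rw [frobNorm, frobNorm, Real.sq_sqrt (by positivity), Real.sq_sqrt (by positivity),
    Finset.mul_sum]
  refine Finset.sum_le_sum fun i _ => ?_
  have hrow := aux_row_ineq k (X i) (Q (ψ i)) (hX i) (hqrow (ψ i)) (clsSize ψ (ψ i)) (hcls_pos i)
  have hLrw : ∀ j, (rowNormalize X - assign ψ * Q) i j = X i j / vecNorm (X i) - Q (ψ i) j := by
    intro j; simp [rowNormalize, Matrix.sub_apply, hZQ]
  have hRrw : ∀ j, (X - assign ψ * invSqrtClsDiag ψ * Q) i j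
      = X i j - (Real.sqrt (clsSize ψ (ψ i)))⁻¹ * Q (ψ i) j := by
    intro j; simp [Matrix.sub_apply, hZDQ]
  calc ∑ j, (rowNormalize X - assign ψ * Q) i j ^ 2
      = ∑ j, (X i j / vecNorm (X i) - Q (ψ i) j) ^ 2 := by
        exact Finset.sum_congr rfl fun j _ => by rw [hLrw]
    _ ≤ 4 * (clsSize ψ (ψ i) : ℝ) *
          ∑ j, (X i j - (Real.sqrt (clsSize ψ (ψ i)))⁻¹ * Q (ψ i) j) ^ 2 := hrow
    _ ≤ 4 * (maxClsSize ψ : ℝ) *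
          ∑ j, (X i j - (Real.sqrt (clsSize ψ (ψ i)))⁻¹ * Q (ψ i) j) ^ 2 := by
        apply mul_le_mul_of_nonneg_right _ (by positivity)
        have := hcls_le i; linarith
    _ = 4 * (maxClsSize ψ : ℝ) * ∑ j, (X - assign ψ * invSqrtClsDiag ψ * Q) i j ^ 2 := by
        congr 1
        exact Finset.sum_congr rfl fun j _ => by rw [hRrw]


end
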